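/- Let λ1, λ2 ∈ Q_I^{++}, and suppose μ1, μ2 ∈ V are subdominant to λ1 and λ2 respectively and ⟨μ1, μ2⟩ = ⟨λ1, λ2⟩. Then there exists a single element w ∈ W, sending α_i to a positive root for every i ∈ I (i.e. w ∈ W^I), such that μ1 = wλ1 and μ2 = wλ2. -/

import Mathlib

/-!
Combinatorial setup: a finite crystallographic root system `Φ` spanning a Euclidean
space `V`, with a chosen system of simple roots `α 1, …, α r`, simple coroots
`αᵛ i = (2/⟪α i, α i⟫) • α i`, Weyl group `W` (the subgroup of linear isometries
generated by the reflections in the simple roots), dominant elements, and the notion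
of `μ` being subdominant to a dominant `λ` (the dominant representative `μ⁺` of the
orbit `W μ` satisfies `λ - μ⁺ ∈ Σᵢ ℝ≥0 αᵛ i`).  `Q_I^+` is encoded via the pairings
with the simple coroots: `λ ∈ Q_I^+` iff `⟪λ, αᵛ j⟫ ∈ ℤ≥0` for all `j` and
`⟪λ, αᵛ j⟫ = 0` for `j ∈ I` (equivalently `λ = Σ_{i ∉ I} n_i ω_i`, `n_i ∈ ℤ≥0`,
where the `ω_i` are the fundamental weights, the dual basis to the simple coroots).
-/

open scoped RealInnerProductSpace

/-- A finite crystallographic root system spanning `V`, together with a choice of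
system of simple roots `α 1, …, α r`. -/
structure SimpleSystem (V : Type*) [NormedAddCommGroup V] [InnerProductSpace ℝ V]
    (r : ℕ) where
  /-- the (finite) set of roots -/
  Φ : Finset V
  /-- the simple roots -/
  α : Fin r → V
  α_mem : ∀ i, α i ∈ Φ
  ne_zero : ∀ β ∈ Φ, β ≠ 0
  span_eq_top : Submodule.span ℝ (Φ : Set V) = ⊤
  indep : LinearIndependent ℝ α
  /-- every root is a nonnegative or a nonpositive combination of the simple roots -/
  base : ∀ β ∈ Φ, (∃ c : Fin r → ℝ, (∀ i, 0 ≤ c i) ∧ β = ∑ i, c i • α i) ∨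
      (∃ c : Fin r → ℝ, (∀ i, 0 ≤ c i) ∧ β = - ∑ i, c i • α i)
  /-- the crystallographic condition -/
  crystallographic : ∀ β ∈ Φ, ∀ γ ∈ Φ, ∃ n : ℤ, 2 * ⟪β, γ⟫ / ⟪γ, γ⟫ = (n : ℝ)
  /-- `Φ` is stable under the reflections `s_β` -/
  reflect_mem : ∀ β ∈ Φ, ∀ γ ∈ Φ, γ - (2 * ⟪γ, β⟫ / ⟪β, β⟫) • β ∈ Φ

namespace SimpleSystem

variable {V : Type*} [NormedAddCommGroup V] [InnerProductSpace ℝ V]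
  [FiniteDimensional ℝ V] {r : ℕ}

/-- The simple coroot `αᵛ i = 2 α i / ⟪α i, α i⟫`. -/
noncomputable def coroot (S : SimpleSystem V r) (i : Fin r) : V :=
  (2 / ⟪S.α i, S.α i⟫) • S.α i

/-- The simple reflection `s_i`: the orthogonal reflection in the hyperplane
orthogonal to the simple root `α i`. -/
noncomputable def simpleReflection (S : SimpleSystem V r) (i : Fin r) : V ≃ₗᵢ[ℝ] V :=
  Submodule.reflection (ℝ ∙ S.α i)ᗮ

/-- The Weyl group `W`, as a group of linear isometries of `V`. -/
def weylGroup (S : SimpleSystem V r) : Subgroup (V ≃ₗᵢ[ℝ] V) :=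
  Subgroup.closure (Set.range S.simpleReflection)

/-- `ξ ∈ V` is dominant if `⟪ξ, αᵛ i⟫ ≥ 0` for all `i`. -/
def IsDominant (S : SimpleSystem V r) (ξ : V) : Prop :=
  ∀ i, 0 ≤ ⟪ξ, S.coroot i⟫

/-- `μ` is subdominant to (the dominant element) `lam` if the dominant element `μ⁺`
of the orbit `W μ` satisfies `lam - μ⁺ ∈ Σᵢ ℝ≥0 • (αᵛ i)`. -/
def IsSubdominant (S : SimpleSystem V r) (lam μ : V) : Prop :=
  ∃ w ∈ S.weylGroup, S.IsDominant (w μ) ∧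
    ∃ c : Fin r → ℝ, (∀ i, 0 ≤ c i) ∧ lam - w μ = ∑ i, c i • S.coroot i

/-- Membership in `Q_I^+ = {Σ_{i ∈ Iᶜ} n_i ω_i : n_i ∈ ℤ≥0}`, characterized by the
pairings with the simple coroots: all of them are nonnegative integers, and those
indexed by `I` vanish. -/
def MemQplus (S : SimpleSystem V r) (I : Finset (Fin r)) (lam : V) : Prop :=
  ∀ j, (∃ n : ℕ, ⟪lam, S.coroot j⟫ = (n : ℝ)) ∧ (j ∈ I → ⟪lam, S.coroot j⟫ = 0)

/-- Membership in `Q_I^{++} = {Σ_{i ∈ Iᶜ} n_i ω_i : n_i ∈ ℤ>0}`. -/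
def MemQplusplus (S : SimpleSystem V r) (I : Finset (Fin r)) (lam : V) : Prop :=
  ∀ j, (j ∉ I → ∃ n : ℕ, 0 < n ∧ ⟪lam, S.coroot j⟫ = (n : ℝ)) ∧
    (j ∈ I → ⟪lam, S.coroot j⟫ = 0)

/-- `β` is a positive root: a root which is a nonnegative combination of the
simple roots. -/
def IsPositiveRoot (S : SimpleSystem V r) (β : V) : Prop :=
  β ∈ S.Φ ∧ ∃ c : Fin r → ℝ, (∀ i, 0 ≤ c i) ∧ β = ∑ i, c i • S.α i

end SimpleSystem

namespace SimpleSystem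

section Dev

variable {V : Type*} [NormedAddCommGroup V] [InnerProductSpace ℝ V]
  [FiniteDimensional ℝ V] {r : ℕ} (S : SimpleSystem V r)

lemma alpha_ne_zero (i : Fin r) : S.α i ≠ 0 := S.ne_zero _ (S.α_mem i)

lemma inner_alpha_pos (i : Fin r) : 0 < ⟪S.α i, S.α i⟫ := by
  by_contra h
  push_neg at h
  exact S.alpha_ne_zero i (real_inner_self_nonpos.1 h)

lemma simpleReflection_apply (i : Fin r) (x : V) :
    S.simpleReflection i x = x - (2 * ⟪x, S.α i⟫ / ⟪S.α i, S.α i⟫) • S.α i := by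
  rw [simpleReflection, Submodule.reflection_orthogonal_apply, Submodule.reflection_singleton_apply]
  simp only [RCLike.ofReal_real_eq_id, id_eq]
  rw [(real_inner_self_eq_norm_sq (S.α i)).symm, real_inner_comm (S.α i) x]
  module


set_option linter.unusedSectionVars false

lemma inner_coroot_eq (x : V) (i : Fin r) :
    ⟪x, S.coroot i⟫ = 2 * ⟪x, S.α i⟫ / ⟪S.α i, S.α i⟫ := by
  rw [coroot, real_inner_smul_right]; ring

lemma simpleReflection_apply' (i : Fin r) (x : V) :
    S.simpleReflection i x = x - ⟪x, S.coroot i⟫ • S.α i := by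
  rw [simpleReflection_apply, inner_coroot_eq]

lemma simpleReflection_alpha_self (i : Fin r) :
    S.simpleReflection i (S.α i) = -(S.α i) := by
  rw [simpleReflection_apply]
  rw [mul_div_assoc, div_self (ne_of_gt (S.inner_alpha_pos i)), mul_one]
  module

lemma simpleReflection_mem (i : Fin r) : S.simpleReflection i ∈ S.weylGroup :=
  Subgroup.subset_closure ⟨i, rfl⟩

lemma simpleReflection_inv (i : Fin r) :
    (S.simpleReflection i)⁻¹ = S.simpleReflection i := by
  ext x
  rw [LinearIsometryEquiv.coe_inv]
  show (S.simpleReflection i).symm x = _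
  rw [simpleReflection, Submodule.reflection_symm]

/-- negative root -/
def IsNegativeRoot (β : V) : Prop :=
  β ∈ S.Φ ∧ ∃ c : Fin r → ℝ, (∀ i, 0 ≤ c i) ∧ β = -∑ i, c i • S.α i

lemma pos_or_neg {β : V} (hβ : β ∈ S.Φ) :
    S.IsPositiveRoot β ∨ S.IsNegativeRoot β := by
  rcases S.base β hβ with h | h
  · exact Or.inl ⟨hβ, h⟩
  · exact Or.inr ⟨hβ, h⟩

lemma coeff_eq {c d : Fin r → ℝ} (h : ∑ i, c i • S.α i = ∑ i, d i • S.α i) :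
    c = d := by
  funext i
  have h2 : ∑ i, (c - d) i • S.α i = 0 := by
    simp only [Pi.sub_apply, sub_smul, Finset.sum_sub_distrib, h, sub_self]
  have := Fintype.linearIndependent_iff.1 S.indep (c - d) h2 i
  have h3 : c i - d i = 0 := this
  linarith

lemma not_pos_and_neg {β : V} (h1 : S.IsPositiveRoot β) (h2 : S.IsNegativeRoot β) :
    False := by
  obtain ⟨hβ, c, hc, hcβ⟩ := h1
  obtain ⟨_, d, hd, hdβ⟩ := h2
  have : ∑ i, c i • S.α i = ∑ i, (-d) i • S.α i := by
    rw [← hcβ]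
    simp only [Pi.neg_apply, neg_smul, ← Finset.sum_neg_distrib, hdβ]
  have hcd := S.coeff_eq this
  apply S.ne_zero β hβ
  rw [hcβ]
  have hci : ∀ i, c i = 0 := fun i => le_antisymm
    (by have := congrFun hcd i; simp only [Pi.neg_apply] at this; linarith [hd i]) (hc i)
  simp [hci]

lemma isPos_alpha (i : Fin r) : S.IsPositiveRoot (S.α i) := by
  refine ⟨S.α_mem i, fun j => if j = i then 1 else 0, fun j => by positivity, ?_⟩
  simp [ite_smul]

lemma weyl_maps_root : ∀ w ∈ S.weylGroup, ∀ β ∈ S.Φ, w β ∈ S.Φ := by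
  have key : ∀ w ∈ S.weylGroup, (∀ β ∈ S.Φ, w β ∈ S.Φ) ∧ (∀ β ∈ S.Φ, w⁻¹ β ∈ S.Φ) := by
    intro w hw
    induction hw using Subgroup.closure_induction with
    | mem x hx =>
      obtain ⟨i, rfl⟩ := hx
      have hgen : ∀ β ∈ S.Φ, S.simpleReflection i β ∈ S.Φ := by
        intro β hβ
        rw [simpleReflection_apply]
        exact S.reflect_mem (S.α i) (S.α_mem i) β hβ
      exact ⟨hgen, by rw [S.simpleReflection_inv]; exact hgen⟩
    | one => simp
    | mul x y _ _ hx hy =>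
      refine ⟨fun β hβ => ?_, fun β hβ => ?_⟩
      · rw [LinearIsometryEquiv.coe_mul, Function.comp_apply]
        exact hx.1 _ (hy.1 β hβ)
      · rw [mul_inv_rev, LinearIsometryEquiv.coe_mul, Function.comp_apply]
        exact hy.2 _ (hx.2 β hβ)
    | inv x _ hx => exact ⟨by simpa using hx.2, by simpa using hx.1⟩
  exact fun w hw => (key w hw).1

lemma eq_of_agree_on_phi {f g : V ≃ₗᵢ[ℝ] V} (h : ∀ β ∈ S.Φ, f β = g β) : f = g := by
  ext x
  have hx : x ∈ Submodule.span ℝ (S.Φ : Set V) := S.span_eq_top ▸ Submodule.mem_top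
  induction hx using Submodule.span_induction with
  | mem y hy => exact h y hy
  | zero => simp
  | add y z _ _ hy hz => simp [map_add, hy, hz]
  | smul a y _ hy => simp [map_smul, hy]

lemma finite_weyl : Finite S.weylGroup := by
  have himg : ∀ (w : S.weylGroup) (β : S.Φ), (w : V ≃ₗᵢ[ℝ] V) β.1 ∈ S.Φ :=
    fun w β => S.weyl_maps_root w.1 w.2 β.1 β.2
  have : Function.Injective (fun (w : S.weylGroup) => fun (β : S.Φ) =>
      (⟨(w : V ≃ₗᵢ[ℝ] V) β.1, himg w β⟩ : S.Φ)) := by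
    intro w w' hww
    ext1
    apply S.eq_of_agree_on_phi
    intro β hβ
    have := congrFun hww ⟨β, hβ⟩
    exact Subtype.ext_iff.1 this
  exact Finite.of_injective _ this


/-- The product of the simple reflections along a list of indices. -/
noncomputable def sword (l : List (Fin r)) : V ≃ₗᵢ[ℝ] V := (l.map S.simpleReflection).prod

@[simp] lemma sword_nil : S.sword [] = 1 := rfl

lemma sword_cons (j : Fin r) (l : List (Fin r)) :
    S.sword (j :: l) = S.simpleReflection j * S.sword l := by
  simp [sword]

lemma sword_append (l1 l2 : List (Fin r)) :
    S.sword (l1 ++ l2) = S.sword l1 * S.sword l2 := by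
  simp [sword]

lemma sword_mem (l : List (Fin r)) : S.sword l ∈ S.weylGroup := by
  induction l with
  | nil => exact Subgroup.one_mem _
  | cons j l ih => rw [sword_cons]; exact Subgroup.mul_mem _ (S.simpleReflection_mem j) ih

lemma simple_sq (i : Fin r) : S.simpleReflection i * S.simpleReflection i = 1 := by
  conv_lhs => rw [← S.simpleReflection_inv i]
  exact inv_mul_cancel (S.simpleReflection i)

lemma sword_reverse_inv (l : List (Fin r)) : (S.sword l)⁻¹ = S.sword l.reverse := by
  induction l with
  | nil => simp
  | cons j l ih =>
    rw [sword_cons, mul_inv_rev, ih, S.simpleReflection_inv, List.reverse_cons,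
      sword_append]
    simp [sword]

lemma exists_word : ∀ w ∈ S.weylGroup, ∃ l : List (Fin r), S.sword l = w := by
  intro w hw
  induction hw using Subgroup.closure_induction with
  | mem x hx =>
    obtain ⟨i, rfl⟩ := hx
    exact ⟨[i], by simp [sword]⟩
  | one => exact ⟨[], rfl⟩
  | mul x y _ _ hx hy =>
    obtain ⟨l1, rfl⟩ := hx
    obtain ⟨l2, rfl⟩ := hy
    exact ⟨l1 ++ l2, S.sword_append l1 l2⟩
  | inv x _ hx =>
    obtain ⟨l, rfl⟩ := hx
    exact ⟨l.reverse, (S.sword_reverse_inv l).symm⟩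

/-- A positive root sent to a negative root by a simple reflection is a positive
multiple of the corresponding simple root. -/
lemma pos_to_neg_of_simple {β : V} {j : Fin r} (hβ : S.IsPositiveRoot β)
    (hneg : S.IsNegativeRoot (S.simpleReflection j β)) :
    ∃ t : ℝ, 0 < t ∧ β = t • S.α j := by
  obtain ⟨hβΦ, c, hc, hcβ⟩ := hβ
  obtain ⟨_, d, hd, hdβ⟩ := hneg
  set K := ⟪β, S.coroot j⟫ with hK
  have hs : S.simpleReflection j β = β - K • S.α j := S.simpleReflection_apply' j β
  set e : Fin r → ℝ := fun i => c i - (if i = j then K else 0) with he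
  have h1 : ∑ i, e i • S.α i = ∑ i, (-d) i • S.α i := by
    have lhs : ∑ i, e i • S.α i = β - K • S.α j := by
      simp only [he, sub_smul, ite_smul, zero_smul, Finset.sum_sub_distrib]
      rw [Finset.sum_ite_eq' Finset.univ j (fun x => K • S.α x)]
      simp [← hcβ]
    rw [lhs, ← hs, hdβ]
    simp
  have hed := S.coeff_eq h1
  have hzero : ∀ i, i ≠ j → c i = 0 := by
    intro i hij
    have := congrFun hed i
    simp only [he, if_neg hij, sub_zero, Pi.neg_apply] at this
    exact le_antisymm (by linarith [hd i]) (hc i)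
  have hβj : β = c j • S.α j := by
    rw [hcβ]
    rw [Finset.sum_eq_single j]
    · intro b _ hb; rw [hzero b hb, zero_smul]
    · intro h; exact absurd (Finset.mem_univ j) h
  refine ⟨c j, ?_, hβj⟩
  rcases lt_or_eq_of_le (hc j) with h | h
  · exact h
  · exfalso
    apply S.ne_zero β hβΦ
    rw [hβj, ← h, zero_smul]

lemma conj_simple {u : V ≃ₗᵢ[ℝ] V} {k j : Fin r} {t : ℝ} (ht : t ≠ 0)
    (h : u (S.α k) = t • S.α j) :
    S.simpleReflection j * u = u * S.simpleReflection k := by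
  have hA : ⟪S.α k, S.α k⟫ ≠ 0 := ne_of_gt (S.inner_alpha_pos k)
  have hαj : S.α j = t⁻¹ • u (S.α k) := by rw [h, smul_smul, inv_mul_cancel₀ ht, one_smul]
  ext x
  rw [LinearIsometryEquiv.coe_mul, LinearIsometryEquiv.coe_mul, Function.comp_apply,
    Function.comp_apply, simpleReflection_apply, simpleReflection_apply, map_sub, map_smul, h]
  have e1 : ⟪u x, S.α j⟫ = ⟪x, S.α k⟫ / t := by
    rw [hαj, real_inner_smul_right, LinearIsometryEquiv.inner_map_map]
    field_simp
  have e2 : ⟪S.α j, S.α j⟫ = ⟪S.α k, S.α k⟫ / t ^ 2 := by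
    rw [hαj, real_inner_smul_right, real_inner_smul_left, LinearIsometryEquiv.inner_map_map,
      eq_div_iff (pow_ne_zero 2 ht)]
    field_simp
  rw [e1, e2, smul_smul]
  congr 2
  field_simp

lemma first_neg (l : List (Fin r)) (β : V) (hβ : S.IsPositiveRoot β)
    (hneg : S.IsNegativeRoot (S.sword l β)) :
    ∃ m1 j m2, l = m1 ++ j :: m2 ∧ S.IsPositiveRoot (S.sword m2 β) ∧
      S.IsNegativeRoot (S.simpleReflection j (S.sword m2 β)) := by
  induction l with
  | nil => exact absurd hβ (fun h => S.not_pos_and_neg h (by simpa using hneg))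
  | cons j l ih =>
    by_cases hc : S.IsNegativeRoot (S.sword l β)
    · obtain ⟨m1, j', m2, rfl, h1, h2⟩ := ih hc
      exact ⟨j :: m1, j', m2, rfl, h1, h2⟩
    · have hmem : S.sword l β ∈ S.Φ := S.weyl_maps_root _ (S.sword_mem l) β hβ.1
      have hpos := (S.pos_or_neg hmem).resolve_right hc
      refine ⟨[], j, l, rfl, hpos, ?_⟩
      rw [sword_cons] at hneg
      exact hneg

lemma factF_aux : ∀ n (l : List (Fin r)), l.length = n →
    (∀ i, S.IsPositiveRoot (S.sword l (S.α i))) → S.sword l = 1 := by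
  intro n
  induction n using Nat.strong_induction_on with
  | _ n IH =>
    intro l hlen hpos
    rcases l.eq_nil_or_concat with rfl | ⟨l', k, rfl⟩
    · rfl
    simp only [List.concat_eq_append] at hlen hpos ⊢
    have hws : S.sword (l' ++ [k]) = S.sword l' * S.simpleReflection k := by
      rw [sword_append]; simp [sword]
    have hv : S.sword l' = S.sword (l' ++ [k]) * S.simpleReflection k := by
      rw [hws, mul_assoc, simple_sq, mul_one]
    have hvneg : S.IsNegativeRoot (S.sword l' (S.α k)) := by
      have h1 : S.sword l' (S.α k) = -(S.sword (l' ++ [k]) (S.α k)) := by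
        rw [hv, LinearIsometryEquiv.coe_mul, Function.comp_apply,
          S.simpleReflection_alpha_self, map_neg]
      obtain ⟨hΦ, c, hc, hcw⟩ := hpos k
      exact ⟨S.weyl_maps_root _ (S.sword_mem l') _ (S.α_mem k), c, hc, by rw [h1, hcw]⟩
    obtain ⟨m1, j, m2, hdecomp, hγpos, hγneg⟩ := S.first_neg l' (S.α k) (S.isPos_alpha k) hvneg
    obtain ⟨t, ht, hγ⟩ := S.pos_to_neg_of_simple hγpos hγneg
    have hconj : S.simpleReflection j * S.sword m2 = S.sword m2 * S.simpleReflection k :=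
      S.conj_simple (ne_of_gt ht) hγ
    have hshort : S.sword (l' ++ [k]) = S.sword (m1 ++ m2) := by
      have h2 : S.sword l' = S.sword m1 * (S.simpleReflection j * S.sword m2) := by
        rw [hdecomp, sword_append, sword_cons]
      rw [hws, h2, hconj, sword_append, mul_assoc, mul_assoc, simple_sq, mul_one]
    have hlt : (m1 ++ m2).length < n := by
      have h3 : l'.length = m1.length + m2.length + 1 := by
        rw [hdecomp]; simp [List.length_append]; omega
      have hn : l'.length + 1 = n := by simpa using hlen
      simp only [List.length_append]
      omega
    rw [hshort]
    exact IH _ hlt (m1 ++ m2) rfl (by rw [← hshort]; exact hpos)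

lemma eq_one_of_simple_pos {w : V ≃ₗᵢ[ℝ] V} (hw : w ∈ S.weylGroup)
    (hpos : ∀ i, S.IsPositiveRoot (w (S.α i))) : w = 1 := by
  obtain ⟨l, rfl⟩ := S.exists_word w hw
  exact S.factF_aux l.length l rfl hpos


lemma span_alpha_top : Submodule.span ℝ (Set.range S.α) = ⊤ := by
  rw [← top_le_iff, ← S.span_eq_top, Submodule.span_le]
  intro β hβ
  have mem : ∀ c : Fin r → ℝ, (∑ i, c i • S.α i) ∈ Submodule.span ℝ (Set.range S.α) :=
    fun c => Submodule.sum_mem _ fun i _ =>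
      Submodule.smul_mem _ _ (Submodule.subset_span ⟨i, rfl⟩)
  rcases S.base β hβ with ⟨c, _, rfl⟩ | ⟨c, _, rfl⟩
  · exact mem c
  · exact Submodule.neg_mem _ (mem c)

/-- The basis of simple roots. -/
noncomputable def basisAlpha : Module.Basis (Fin r) ℝ V :=
  Module.Basis.mk S.indep (by rw [S.span_alpha_top])

/-- A strictly dominant vector: `⟪δ, α i⟫ = 1` for every simple root. -/
noncomputable def delta : V :=
  ∑ i, (InnerProductSpace.toDual ℝ V).symm
    (LinearMap.toContinuousLinearMap (S.basisAlpha.coord i))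

lemma inner_delta_alpha (j : Fin r) : ⟪S.delta, S.α j⟫ = 1 := by
  rw [delta, sum_inner]
  have h : ∀ i, ⟪(InnerProductSpace.toDual ℝ V).symm
      (LinearMap.toContinuousLinearMap (S.basisAlpha.coord i)), S.α j⟫
      = S.basisAlpha.coord i (S.α j) := fun i => InnerProductSpace.toDual_symm_apply
  simp only [h]
  have hb : ∀ i, S.basisAlpha.coord i (S.α j) = if j = i then 1 else 0 := by
    intro i
    rw [Module.Basis.coord_apply, show S.α j = S.basisAlpha j from (Module.Basis.mk_apply _ _ _).symm,
      Module.Basis.repr_self]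
    exact Finsupp.single_apply
  simp [hb]

lemma inner_delta_coroot (j : Fin r) : 0 < ⟪S.delta, S.coroot j⟫ := by
  rw [inner_coroot_eq, inner_delta_alpha, mul_one]
  exact div_pos two_pos (S.inner_alpha_pos j)

lemma sum_coeff_pos {c : Fin r → ℝ} (hc : ∀ i, 0 ≤ c i)
    (hne : ∑ i, c i • S.α i ≠ 0) : 0 < ∑ i, c i := by
  rcases (Finset.sum_nonneg (fun i _ => hc i)).lt_or_eq with h | h
  · exact h
  · exfalso
    apply hne
    have hzero : ∀ i ∈ Finset.univ, c i = 0 :=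
      (Finset.sum_eq_zero_iff_of_nonneg (fun i _ => hc i)).1 h.symm
    exact Finset.sum_eq_zero fun i hi => by rw [hzero i hi, zero_smul]

lemma inner_delta_pos {β : V} (hβ : S.IsPositiveRoot β) : 0 < ⟪S.delta, β⟫ := by
  obtain ⟨hΦ, c, hc, rfl⟩ := hβ
  rw [inner_sum]
  simp only [real_inner_smul_right, inner_delta_alpha, mul_one]
  exact S.sum_coeff_pos hc (S.ne_zero _ hΦ)

lemma inner_delta_neg {β : V} (hβ : S.IsNegativeRoot β) : ⟪S.delta, β⟫ < 0 := by
  obtain ⟨hΦ, c, hc, hβ'⟩ := hβ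
  have : β = -∑ i, c i • S.α i := hβ'
  rw [this, inner_neg_right, neg_lt, neg_zero, inner_sum]
  simp only [real_inner_smul_right, inner_delta_alpha, mul_one]
  exact S.sum_coeff_pos hc (by rw [← neg_neg (∑ i, c i • S.α i), ← this]; simpa using S.ne_zero β hΦ)

lemma inner_alpha_of_dominant {ξ : V} (hξ : S.IsDominant ξ) (i : Fin r) :
    0 ≤ ⟪ξ, S.α i⟫ := by
  have h := hξ i
  rw [inner_coroot_eq] at h
  by_contra hcon
  push_neg at hcon
  have : 2 * ⟪ξ, S.α i⟫ / ⟪S.α i, S.α i⟫ < 0 :=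
    div_neg_of_neg_of_pos (by linarith) (S.inner_alpha_pos i)
  linarith

open scoped Classical in
/-- The number of positive roots sent to negative roots. -/
noncomputable def negCard (w : V ≃ₗᵢ[ℝ] V) : ℕ :=
  (S.Φ.filter (fun β => S.IsPositiveRoot β ∧ S.IsNegativeRoot (w β))).card

lemma simple_invol (i : Fin r) (x : V) :
    S.simpleReflection i (S.simpleReflection i x) = x := by
  have := congrArg (fun f : V ≃ₗᵢ[ℝ] V => f x) (S.simple_sq i)
  simpa using this

lemma neg_alpha_negroot (i : Fin r) : S.IsNegativeRoot (-(S.α i)) := by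
  have hmem : -(S.α i) ∈ S.Φ := by
    rw [← S.simpleReflection_alpha_self i]
    exact S.weyl_maps_root _ (S.simpleReflection_mem i) _ (S.α_mem i)
  obtain ⟨_, c, hc, hrep⟩ := S.isPos_alpha i
  exact ⟨hmem, c, hc, by rw [← hrep]⟩

open scoped Classical in
lemma negCard_lt {w : V ≃ₗᵢ[ℝ] V} {i : Fin r}
    (hneg : S.IsNegativeRoot (w (S.α i))) :
    S.negCard (w * S.simpleReflection i) < S.negCard w := by
  classical
  rw [negCard, negCard]
  set A := S.Φ.filter (fun β => S.IsPositiveRoot β ∧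
    S.IsNegativeRoot ((w * S.simpleReflection i) β)) with hA
  set B := S.Φ.filter (fun β => S.IsPositiveRoot β ∧ S.IsNegativeRoot (w β)) with hB
  have hmain : ∀ β ∈ A, S.simpleReflection i β ∈ B.erase (S.α i) := by
    intro β hβ
    rw [hA, Finset.mem_filter] at hβ
    obtain ⟨hβΦ, hβpos, hβneg⟩ := hβ
    rw [LinearIsometryEquiv.coe_mul, Function.comp_apply] at hβneg
    have hsiΦ : S.simpleReflection i β ∈ S.Φ :=
      S.weyl_maps_root _ (S.simpleReflection_mem i) _ hβΦ
    have hsipos : S.IsPositiveRoot (S.simpleReflection i β) := by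
      rcases S.pos_or_neg hsiΦ with h | h
      · exact h
      · exfalso
        obtain ⟨t, ht, hβt⟩ := S.pos_to_neg_of_simple hβpos h
        obtain ⟨_, d, hd, hwαd⟩ := hneg
        have hwsi : w (S.simpleReflection i β) = ∑ j, (t * d j) • S.α j := by
          have h1 : w (S.simpleReflection i β) = t • -(w (S.α i)) := by
            rw [hβt]
            simp [S.simpleReflection_alpha_self]
          rw [h1, hwαd]
          simp [smul_neg, Finset.smul_sum, smul_smul]
        have hposrep : S.IsPositiveRoot (w (S.simpleReflection i β)) :=
          ⟨hβneg.1, fun j => t * d j, fun j => mul_nonneg ht.le (hd j), hwsi⟩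
        exact S.not_pos_and_neg hposrep hβneg
    refine Finset.mem_erase.2 ⟨?_, Finset.mem_filter.2 ⟨hsiΦ, hsipos, hβneg⟩⟩
    intro hcon
    have hβval : β = -(S.α i) := by
      have := congrArg (S.simpleReflection i) hcon
      rw [S.simple_invol, S.simpleReflection_alpha_self] at this
      exact this
    exact S.not_pos_and_neg hβpos (hβval ▸ S.neg_alpha_negroot i)
  have hinj : Set.InjOn (S.simpleReflection i) A := fun x _ y _ h =>
    (S.simpleReflection i).injective h
  calc A.card ≤ (B.erase (S.α i)).card := Finset.card_le_card_of_injOn _ hmain hinj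
    _ < B.card := Finset.card_erase_lt_of_mem
      (Finset.mem_filter.2 ⟨S.α_mem i, S.isPos_alpha i, hneg⟩)

lemma dominant_unique_aux : ∀ n : ℕ, ∀ w ∈ S.weylGroup, S.negCard w = n →
    ∀ x : V, S.IsDominant x → S.IsDominant (w x) → w x = x := by
  intro n
  induction n using Nat.strong_induction_on with
  | _ n IH =>
    intro w hw hcard x hx hwx
    by_cases hc : ∃ i, S.IsNegativeRoot (w (S.α i))
    · obtain ⟨i, hi⟩ := hc
      have hxa : ⟪x, S.α i⟫ = 0 := by
        have h1 : 0 ≤ ⟪x, S.α i⟫ := S.inner_alpha_of_dominant hx i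
        have h2 : ⟪w x, w (S.α i)⟫ = ⟪x, S.α i⟫ := LinearIsometryEquiv.inner_map_map _ _ _
        obtain ⟨_, d, hd, hrep⟩ := hi
        have h3 : ⟪w x, w (S.α i)⟫ ≤ 0 := by
          rw [hrep, inner_neg_right, inner_sum]
          simp only [real_inner_smul_right]
          have : 0 ≤ ∑ j, d j * ⟪w x, S.α j⟫ := Finset.sum_nonneg fun j _ =>
            mul_nonneg (hd j) (S.inner_alpha_of_dominant hwx j)
          linarith
        linarith
      have hsix : S.simpleReflection i x = x := by
        rw [simpleReflection_apply, hxa]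
        simp
      have hwsix : (w * S.simpleReflection i) x = w x := by
        rw [LinearIsometryEquiv.coe_mul, Function.comp_apply, hsix]
      have hlt : S.negCard (w * S.simpleReflection i) < n := hcard ▸ S.negCard_lt hi
      have hmem : w * S.simpleReflection i ∈ S.weylGroup :=
        Subgroup.mul_mem _ hw (S.simpleReflection_mem i)
      have := IH _ hlt _ hmem rfl x hx (by rw [hwsix]; exact hwx)
      rw [← hwsix, this]
    · push_neg at hc
      have hpos : ∀ i, S.IsPositiveRoot (w (S.α i)) := fun i =>
        (S.pos_or_neg (S.weyl_maps_root _ hw _ (S.α_mem i))).resolve_right (hc i)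
      rw [S.eq_one_of_simple_pos hw hpos]
      rfl

lemma dominant_unique {w : V ≃ₗᵢ[ℝ] V} (hw : w ∈ S.weylGroup) {x : V}
    (hx : S.IsDominant x) (hwx : S.IsDominant (w x)) : w x = x :=
  S.dominant_unique_aux (S.negCard w) w hw rfl x hx hwx


lemma cone_lemma {η : V} (hη : S.IsDominant η) :
    ∀ w ∈ S.weylGroup, ∃ a : Fin r → ℝ,
      (∀ i, 0 ≤ a i) ∧ η - w η = ∑ i, a i • S.α i := by
  classical
  have hfin : Finite ↥S.weylGroup := S.finite_weyl
  haveI : Fintype ↥S.weylGroup := Fintype.ofFinite _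
  set O : Finset V := Finset.image (fun w : ↥S.weylGroup => (w : V ≃ₗᵢ[ℝ] V) η)
    Finset.univ with hO
  set m : V → ℕ := fun ν => (O.filter (fun x => ⟪S.delta, ν⟫ < ⟪S.delta, x⟫)).card with hm
  suffices h : ∀ n, ∀ w ∈ S.weylGroup, m (w η) = n → ∃ a : Fin r → ℝ,
      (∀ i, 0 ≤ a i) ∧ η - w η = ∑ i, a i • S.α i by
    intro w hw; exact h (m (w η)) w hw rfl
  intro n
  induction n using Nat.strong_induction_on with
  | _ n IH =>
    intro w hw hcard
    by_cases hdom : S.IsDominant (w η)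
    · refine ⟨fun _ => 0, fun _ => le_refl _, ?_⟩
      rw [S.dominant_unique hw hη hdom]
      simp
    · rw [IsDominant] at hdom
      push_neg at hdom
      obtain ⟨i, hi⟩ := hdom
      set K := ⟪w η, S.coroot i⟫ with hK
      have hKneg : K < 0 := hi
      have hw' : S.simpleReflection i * w ∈ S.weylGroup :=
        Subgroup.mul_mem _ (S.simpleReflection_mem i) hw
      have h1 : (S.simpleReflection i * w) η = w η - K • S.α i := by
        rw [LinearIsometryEquiv.coe_mul, Function.comp_apply, simpleReflection_apply']
      have h2 : ⟪S.delta, (S.simpleReflection i * w) η⟫ = ⟪S.delta, w η⟫ - K := by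
        rw [h1, inner_sub_right, real_inner_smul_right, inner_delta_alpha, mul_one]
      have hgt : ⟪S.delta, w η⟫ < ⟪S.delta, (S.simpleReflection i * w) η⟫ := by
        rw [h2]; linarith
      have hmemO : (S.simpleReflection i * w) η ∈ O :=
        Finset.mem_image.2 ⟨⟨_, hw'⟩, Finset.mem_univ _, rfl⟩
      have hlt : m ((S.simpleReflection i * w) η) < n := by
        rw [← hcard, hm]
        apply Finset.card_lt_card
        have hsub : O.filter (fun x => ⟪S.delta, (S.simpleReflection i * w) η⟫ < ⟪S.delta, x⟫)
            ⊆ O.filter (fun x => ⟪S.delta, w η⟫ < ⟪S.delta, x⟫) := fun x hx => by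
          rw [Finset.mem_filter] at *
          exact ⟨hx.1, lt_trans hgt hx.2⟩
        rw [Finset.ssubset_iff_of_subset hsub]
        exact ⟨(S.simpleReflection i * w) η,
          Finset.mem_filter.2 ⟨hmemO, hgt⟩, fun hmem => lt_irrefl _ (Finset.mem_filter.1 hmem).2⟩
      obtain ⟨a', ha', hrep'⟩ := IH _ hlt _ hw' rfl
      refine ⟨fun j => a' j + if j = i then -K else 0, fun j => ?_, ?_⟩
      · dsimp only
        split_ifs with hji
        · linarith [ha' j]
        · linarith [ha' j]
      · have hstep : η - w η = (η - (S.simpleReflection i * w) η) + (-K) • S.α i := by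
          rw [h1, neg_smul]; abel
        rw [hstep, hrep']
        rw [show ∑ j, (a' j + if j = i then -K else 0) • S.α j
            = ∑ j, a' j • S.α j + ∑ j, (if j = i then -K else 0) • S.α j by
          rw [← Finset.sum_add_distrib]; congr 1; funext j; rw [add_smul]]
        congr 1
        simp only [ite_smul, zero_smul]
        rw [Finset.sum_ite_eq' Finset.univ i (fun j => (-K) • S.α j)]
        simp

lemma cartan_nonpos {i j : Fin r} (hij : i ≠ j) : ⟪S.α i, S.α j⟫ ≤ 0 := by
  classical
  set K := ⟪S.α i, S.coroot j⟫ with hK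
  have hγΦ : S.α i - K • S.α j ∈ S.Φ := by
    have h0 := S.reflect_mem (S.α j) (S.α_mem j) (S.α i) (S.α_mem i)
    rwa [← inner_coroot_eq] at h0
  set e : Fin r → ℝ := fun l => (if l = i then (1:ℝ) else 0) - (if l = j then K else 0) with he
  have hrep : ∑ l, e l • S.α l = S.α i - K • S.α j := by
    simp only [he, sub_smul, ite_smul, zero_smul, one_smul, Finset.sum_sub_distrib]
    rw [Finset.sum_ite_eq' Finset.univ i (fun l => S.α l),
        Finset.sum_ite_eq' Finset.univ j (fun l => K • S.α l)]
    simp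
  have hKle : K ≤ 0 := by
    rcases S.pos_or_neg hγΦ with h | h
    · obtain ⟨_, c, hc, hcrep⟩ := h
      have hec := S.coeff_eq (hrep.trans hcrep)
      have hej := congrFun hec j
      simp [he, Ne.symm hij] at hej
      linarith [hc j]
    · exfalso
      obtain ⟨_, d, hd, hdrep⟩ := h
      have hsum : S.α i - K • S.α j = ∑ l, (-d) l • S.α l := by
        rw [hdrep]
        simp [neg_smul, Finset.sum_neg_distrib]
      have hed := S.coeff_eq (hrep.trans hsum)
      have hei := congrFun hed i
      simp [he, hij, Pi.neg_apply] at hei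
      linarith [hd i]
  rw [hK, inner_coroot_eq] at hKle
  by_contra hcon
  push_neg at hcon
  have h7 : 0 < 2 * ⟪S.α i, S.α j⟫ / ⟪S.α j, S.α j⟫ :=
    div_pos (by linarith) (S.inner_alpha_pos j)
  linarith

lemma fix_of_parabolic_span {η : V} (hη : S.IsDominant η) (I : Finset (Fin r))
    (hηI : ∀ i ∈ I, ⟪η, S.coroot i⟫ = 0) :
    ∀ w ∈ S.weylGroup,
      (∃ a : Fin r → ℝ, (∀ i, i ∉ I → a i = 0) ∧ η - w η = ∑ i, a i • S.α i) →
      w η = η := by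
  classical
  have hfin : Finite ↥S.weylGroup := S.finite_weyl
  haveI : Fintype ↥S.weylGroup := Fintype.ofFinite _
  set O : Finset V := Finset.image (fun w : ↥S.weylGroup => (w : V ≃ₗᵢ[ℝ] V) η)
    Finset.univ with hO
  set m : V → ℕ := fun ν => (O.filter (fun x => ⟪S.delta, ν⟫ < ⟪S.delta, x⟫)).card with hm
  suffices h : ∀ n, ∀ w ∈ S.weylGroup, m (w η) = n →
      (∃ a : Fin r → ℝ, (∀ i, i ∉ I → a i = 0) ∧ η - w η = ∑ i, a i • S.α i) →
      w η = η by
    intro w hw; exact h (m (w η)) w hw rfl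
  intro n
  induction n using Nat.strong_induction_on with
  | _ n IH =>
    intro w hw hcard hspan
    by_cases hdom : S.IsDominant (w η)
    · exact S.dominant_unique hw hη hdom
    · rw [IsDominant] at hdom
      push_neg at hdom
      obtain ⟨i, hi⟩ := hdom
      obtain ⟨a, hsupp, hrep⟩ := hspan
      obtain ⟨a'', ha'', hrep''⟩ := S.cone_lemma hη w hw
      have haa : a = a'' := S.coeff_eq (hrep.symm.trans hrep'')
      have hiI : i ∈ I := by
        by_contra hiI
        have hterm : ∀ j, a j * ⟪S.α j, S.coroot i⟫ ≤ 0 := by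
          intro j
          by_cases hj : a j = 0
          · rw [hj]; simp
          · have hjI : j ∈ I := by by_contra h; exact hj (hsupp j h)
            have hji : j ≠ i := fun h => hiI (h ▸ hjI)
            have h1 : ⟪S.α j, S.coroot i⟫ ≤ 0 := by
              rw [inner_coroot_eq]
              have := S.cartan_nonpos hji
              have h2 := S.inner_alpha_pos i
              apply div_nonpos_of_nonpos_of_nonneg <;> nlinarith
            exact mul_nonpos_of_nonneg_of_nonpos (haa ▸ ha'' j) h1
        have hsum : ⟪η - w η, S.coroot i⟫ ≤ 0 := by
          rw [hrep, sum_inner]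
          simp only [real_inner_smul_left]
          exact Finset.sum_nonpos fun j _ => hterm j
        rw [inner_sub_left] at hsum
        have := hη i
        linarith
      set K := ⟪w η, S.coroot i⟫ with hK
      have hKneg : K < 0 := hi
      have hw' : S.simpleReflection i * w ∈ S.weylGroup :=
        Subgroup.mul_mem _ (S.simpleReflection_mem i) hw
      have h1 : (S.simpleReflection i * w) η = w η - K • S.α i := by
        rw [LinearIsometryEquiv.coe_mul, Function.comp_apply, simpleReflection_apply']
      have h2 : ⟪S.delta, (S.simpleReflection i * w) η⟫ = ⟪S.delta, w η⟫ - K := by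
        rw [h1, inner_sub_right, real_inner_smul_right, inner_delta_alpha, mul_one]
      have hgt : ⟪S.delta, w η⟫ < ⟪S.delta, (S.simpleReflection i * w) η⟫ := by
        rw [h2]; linarith
      have hmemO : (S.simpleReflection i * w) η ∈ O :=
        Finset.mem_image.2 ⟨⟨_, hw'⟩, Finset.mem_univ _, rfl⟩
      have hlt : m ((S.simpleReflection i * w) η) < n := by
        rw [← hcard, hm]
        apply Finset.card_lt_card
        have hsub : O.filter (fun x => ⟪S.delta, (S.simpleReflection i * w) η⟫ < ⟪S.delta, x⟫)
            ⊆ O.filter (fun x => ⟪S.delta, w η⟫ < ⟪S.delta, x⟫) := fun x hx => by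
          rw [Finset.mem_filter] at *
          exact ⟨hx.1, lt_trans hgt hx.2⟩
        rw [Finset.ssubset_iff_of_subset hsub]
        exact ⟨(S.simpleReflection i * w) η,
          Finset.mem_filter.2 ⟨hmemO, hgt⟩, fun hmem => lt_irrefl _ (Finset.mem_filter.1 hmem).2⟩
      have hspan' : ∃ a : Fin r → ℝ, (∀ j, j ∉ I → a j = 0) ∧
          η - (S.simpleReflection i * w) η = ∑ j, a j • S.α j := by
        refine ⟨fun j => a j + if j = i then K else 0, fun j hj => ?_, ?_⟩
        · have hji : j ≠ i := fun h => hj (h ▸ hiI)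
          dsimp only
          rw [if_neg hji, hsupp j hj, add_zero]
        · have hstep : η - (S.simpleReflection i * w) η = (η - w η) + K • S.α i := by
            rw [h1]; abel
          rw [hstep, hrep]
          rw [show ∑ j, (a j + if j = i then K else 0) • S.α j
              = ∑ j, a j • S.α j + ∑ j, (if j = i then K else 0) • S.α j by
            rw [← Finset.sum_add_distrib]; congr 1; funext j; rw [add_smul]]
          congr 1
          simp only [ite_smul, zero_smul]
          rw [Finset.sum_ite_eq' Finset.univ i (fun j => K • S.α j)]
          simp
      have hfix := IH _ hlt _ hw' rfl hspan'
      have : w η = S.simpleReflection i ((S.simpleReflection i * w) η) := by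
        rw [LinearIsometryEquiv.coe_mul, Function.comp_apply, S.simple_invol]
      rw [this, hfix, simpleReflection_apply', hηI i hiI, zero_smul, sub_zero]

lemma exists_coset_rep (I : Finset (Fin r)) {w : V ≃ₗᵢ[ℝ] V} (hw : w ∈ S.weylGroup) :
    ∃ z ∈ Subgroup.closure (S.simpleReflection '' (I : Set (Fin r))),
      ∀ i ∈ I, S.IsPositiveRoot ((w * z) (S.α i)) := by
  classical
  set WI := Subgroup.closure (S.simpleReflection '' (I : Set (Fin r))) with hWI
  have hle : WI ≤ S.weylGroup := by
    rw [hWI, Subgroup.closure_le]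
    rintro g ⟨i, _, rfl⟩
    exact S.simpleReflection_mem i
  have : Finite ↥S.weylGroup := S.finite_weyl
  have : Finite ↥WI := Finite.of_injective _ (Subgroup.inclusion_injective hle)
  haveI : Fintype ↥WI := Fintype.ofFinite _
  obtain ⟨z0, _, hmax⟩ := Finset.exists_max_image (Finset.univ : Finset ↥WI)
    (fun z => ⟪(w * (z : V ≃ₗᵢ[ℝ] V)) S.delta, S.delta⟫) ⟨⟨1, one_mem _⟩, Finset.mem_univ _⟩
  refine ⟨z0.1, z0.2, fun i hi => ?_⟩
  have hz' : z0.1 * S.simpleReflection i ∈ WI :=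
    mul_mem z0.2 (Subgroup.subset_closure ⟨i, hi, rfl⟩)
  have hcomp := hmax ⟨_, hz'⟩ (Finset.mem_univ _)
  set c := ⟪S.delta, S.coroot i⟫ with hc
  have hcpos : 0 < c := S.inner_delta_coroot i
  have hcalc : (w * (z0.1 * S.simpleReflection i)) S.delta
      = (w * z0.1) S.delta - c • ((w * z0.1) (S.α i)) := by
    rw [← mul_assoc, LinearIsometryEquiv.coe_mul, Function.comp_apply, simpleReflection_apply',
      map_sub, map_smul, ← hc]
  have hineq : 0 ≤ ⟪(w * z0.1) (S.α i), S.delta⟫ := by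
    have h1 : ⟪(w * (z0.1 * S.simpleReflection i)) S.delta, S.delta⟫
        = ⟪(w * z0.1) S.delta, S.delta⟫ - c * ⟪(w * z0.1) (S.α i), S.delta⟫ := by
      rw [hcalc, inner_sub_left, real_inner_smul_left]
    rw [h1] at hcomp
    nlinarith
  have hβΦ : (w * z0.1) (S.α i) ∈ S.Φ :=
    S.weyl_maps_root _ (Subgroup.mul_mem _ hw (hle z0.2)) _ (S.α_mem i)
  rcases S.pos_or_neg hβΦ with h | h
  · exact h
  · exfalso
    have := S.inner_delta_neg h
    rw [real_inner_comm] at this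
    linarith


lemma parabolic_fixes (I : Finset (Fin r)) {lam : V}
    (hlam : ∀ i ∈ I, ⟪lam, S.coroot i⟫ = 0) :
    ∀ v ∈ Subgroup.closure (S.simpleReflection '' (I : Set (Fin r))), v lam = lam := by
  intro v hv
  induction hv using Subgroup.closure_induction with
  | mem x hx =>
    obtain ⟨i, hi, rfl⟩ := hx
    rw [simpleReflection_apply', hlam i hi, zero_smul, sub_zero]
  | one => rfl
  | mul x y _ _ hx hy =>
    rw [LinearIsometryEquiv.coe_mul, Function.comp_apply, hy, hx]
  | inv x _ hx =>
    conv_lhs => rw [← hx]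
    rw [LinearIsometryEquiv.coe_inv]
    exact x.symm_apply_apply lam

lemma dominant_of_Qpp {I : Finset (Fin r)} {lam : V} (h : S.MemQplusplus I lam) :
    S.IsDominant lam := by
  intro i
  by_cases hi : i ∈ I
  · rw [(h i).2 hi]
  · obtain ⟨n, hn, he⟩ := (h i).1 hi
    rw [he]
    positivity

lemma Qpp_pos {I : Finset (Fin r)} {lam : V} (h : S.MemQplusplus I lam)
    {i : Fin r} (hi : i ∉ I) : 0 < ⟪lam, S.coroot i⟫ := by
  obtain ⟨n, hn, he⟩ := (h i).1 hi
  rw [he]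
  exact_mod_cast hn

end Dev

end SimpleSystem

/-- Lemma 1, second equality case: if `λ1, λ2 ∈ Q_I^{++}`, `μ1, μ2` are subdominant
to `λ1, λ2` respectively and `⟪μ1, μ2⟫ = ⟪λ1, λ2⟫`, then there is a single `w` in the
Weyl group, sending `α i` to a positive root for every `i ∈ I` (i.e. `w ∈ W^I`),
with `μ1 = w λ1` and `μ2 = w λ2`. -/
theorem exists_common_minimal_rep_of_inner_eq {V : Type*} [NormedAddCommGroup V]
    [InnerProductSpace ℝ V] [FiniteDimensional ℝ V] {r : ℕ}
    (S : SimpleSystem V r) (I : Finset (Fin r)) {lam1 lam2 mu1 mu2 : V}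
    (h1 : S.MemQplusplus I lam1) (h2 : S.MemQplusplus I lam2)
    (hm1 : S.IsSubdominant lam1 mu1) (hm2 : S.IsSubdominant lam2 mu2)
    (heq : ⟪mu1, mu2⟫ = ⟪lam1, lam2⟫) :
    ∃ w ∈ S.weylGroup, (∀ i ∈ I, S.IsPositiveRoot (w (S.α i))) ∧
      mu1 = w lam1 ∧ mu2 = w lam2 := by
  classical
  obtain ⟨w1, hw1, hdom1, c, hc, hsub1⟩ := hm1
  obtain ⟨w2, hw2, hdom2, d, hd, hsub2⟩ := hm2
  set ξ := w1 mu1 with hξ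
  set η := w2 mu2 with hη
  have hdomL1 : S.IsDominant lam1 := S.dominant_of_Qpp h1
  have hdomL2 : S.IsDominant lam2 := S.dominant_of_Qpp h2
  set u := w1 * w2⁻¹ with hu
  have huW : u ∈ S.weylGroup := Subgroup.mul_mem _ hw1 (Subgroup.inv_mem _ hw2)
  have huη : u η = w1 mu2 := by
    rw [hu, LinearIsometryEquiv.coe_mul, Function.comp_apply, hη,
      LinearIsometryEquiv.coe_inv, w2.symm_apply_apply]
  obtain ⟨a, ha, hcone⟩ := S.cone_lemma hdom2 u huW
  -- the difference ⟪ξ, η⟫ - ⟪ξ, u η⟫ as a nonnegative sum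
  have e3 : ⟪ξ, η⟫ - ⟪ξ, u η⟫ = ∑ i, a i * ⟪ξ, S.α i⟫ := by
    rw [← inner_sub_right, hcone, inner_sum]
    simp only [real_inner_smul_right]
  have e3nonneg : ∀ i, 0 ≤ a i * ⟪ξ, S.α i⟫ := fun i =>
    mul_nonneg (ha i) (S.inner_alpha_of_dominant hdom1 i)
  have hle1 : ⟪ξ, u η⟫ ≤ ⟪ξ, η⟫ := by
    have := Finset.sum_nonneg (fun i (_ : i ∈ Finset.univ) => e3nonneg i)
    linarith [e3]
  -- the difference ⟪lam1, lam2⟫ - ⟪ξ, η⟫ as a nonnegative sum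
  have hT : ⟪lam1, lam2⟫ - ⟪ξ, η⟫ = ⟪lam1 - ξ, lam2⟫ + ⟪ξ, lam2 - η⟫ := by
    rw [inner_sub_left, inner_sub_right]
    ring
  have hT1 : ⟪lam1 - ξ, lam2⟫ = ∑ i, c i * ⟪S.coroot i, lam2⟫ := by
    rw [hsub1, sum_inner]
    simp only [real_inner_smul_left]
  have hT2 : ⟪ξ, lam2 - η⟫ = ∑ i, d i * ⟪ξ, S.coroot i⟫ := by
    rw [hsub2, inner_sum]
    simp only [real_inner_smul_right]
  have hT1nonneg : ∀ i, 0 ≤ c i * ⟪S.coroot i, lam2⟫ := fun i =>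
    mul_nonneg (hc i) (by rw [real_inner_comm]; exact hdomL2 i)
  have hT2nonneg : ∀ i, 0 ≤ d i * ⟪ξ, S.coroot i⟫ := fun i =>
    mul_nonneg (hd i) (hdom1 i)
  have hle2 : ⟪ξ, η⟫ ≤ ⟪lam1, lam2⟫ := by
    have s1 := Finset.sum_nonneg (fun i (_ : i ∈ Finset.univ) => hT1nonneg i)
    have s2 := Finset.sum_nonneg (fun i (_ : i ∈ Finset.univ) => hT2nonneg i)
    linarith [hT, hT1, hT2]
  -- equalities
  have hμeq : ⟪mu1, mu2⟫ = ⟪ξ, u η⟫ := by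
    rw [huη, hξ, LinearIsometryEquiv.inner_map_map]
  have hE2 : ⟪ξ, η⟫ = ⟪lam1, lam2⟫ := le_antisymm hle2 (by
    rw [← heq, hμeq]; exact hle1)
  have hE1 : ⟪ξ, u η⟫ = ⟪ξ, η⟫ := by rw [← hμeq, heq, hE2]
  -- all terms of the two sums in hE2 vanish
  have hsum0 : ∑ i, c i * ⟪S.coroot i, lam2⟫ + ∑ i, d i * ⟪ξ, S.coroot i⟫ = 0 := by
    rw [← hT1, ← hT2]
    linarith [hT, hE2]
  have hterm1 : ∀ i, c i * ⟪S.coroot i, lam2⟫ = 0 := by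
    have s1 := Finset.sum_nonneg (fun i (_ : i ∈ Finset.univ) => hT1nonneg i)
    have s2 := Finset.sum_nonneg (fun i (_ : i ∈ Finset.univ) => hT2nonneg i)
    have h0 : ∑ i, c i * ⟪S.coroot i, lam2⟫ = 0 := by linarith
    intro i
    exact (Finset.sum_eq_zero_iff_of_nonneg
      (fun i _ => hT1nonneg i)).1 h0 i (Finset.mem_univ i)
  have hterm2 : ∀ i, d i * ⟪ξ, S.coroot i⟫ = 0 := by
    have s1 := Finset.sum_nonneg (fun i (_ : i ∈ Finset.univ) => hT1nonneg i)
    have s2 := Finset.sum_nonneg (fun i (_ : i ∈ Finset.univ) => hT2nonneg i)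
    have h0 : ∑ i, d i * ⟪ξ, S.coroot i⟫ = 0 := by linarith
    intro i
    exact (Finset.sum_eq_zero_iff_of_nonneg
      (fun i _ => hT2nonneg i)).1 h0 i (Finset.mem_univ i)
  have hc0 : ∀ i ∉ I, c i = 0 := by
    intro i hi
    have hpos : 0 < ⟪S.coroot i, lam2⟫ := by
      rw [real_inner_comm]; exact S.Qpp_pos h2 hi
    have := hterm1 i
    rcases mul_eq_zero.1 this with h | h
    · exact h
    · linarith
  -- lam1 = ξ
  have hxiL : lam1 = ξ := by
    have h8 : ⟪lam1 - ξ, lam1 - ξ⟫ ≤ 0 := by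
      nth_rewrite 1 [hsub1]
      rw [sum_inner]
      apply Finset.sum_nonpos
      intro i _
      rw [real_inner_smul_left, inner_sub_right]
      by_cases hi : i ∈ I
      · have hz : ⟪S.coroot i, lam1⟫ = 0 := by
          rw [real_inner_comm]; exact (h1 i).2 hi
        rw [hz]
        have : 0 ≤ ⟪S.coroot i, ξ⟫ := by rw [real_inner_comm]; exact hdom1 i
        have := hc i
        nlinarith
      · rw [hc0 i hi, zero_mul]
    have h9 : lam1 - ξ = 0 := real_inner_self_nonpos.1 h8
    exact sub_eq_zero.1 h9
  have hd0 : ∀ i ∉ I, d i = 0 := by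
    intro i hi
    have hpos : 0 < ⟪ξ, S.coroot i⟫ := by
      rw [← hxiL]; exact S.Qpp_pos h1 hi
    have := hterm2 i
    rcases mul_eq_zero.1 this with h | h
    · exact h
    · linarith
  -- lam2 = η
  have hetaL : lam2 = η := by
    have h8 : ⟪lam2 - η, lam2 - η⟫ ≤ 0 := by
      nth_rewrite 1 [hsub2]
      rw [sum_inner]
      apply Finset.sum_nonpos
      intro i _
      rw [real_inner_smul_left, inner_sub_right]
      by_cases hi : i ∈ I
      · have hz : ⟪S.coroot i, lam2⟫ = 0 := by
          rw [real_inner_comm]; exact (h2 i).2 hi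
        rw [hz]
        have h5 : 0 ≤ ⟪S.coroot i, η⟫ := by rw [real_inner_comm]; exact hdom2 i
        have := hd i
        nlinarith
      · rw [hd0 i hi, zero_mul]
    have h9 : lam2 - η = 0 := real_inner_self_nonpos.1 h8
    exact sub_eq_zero.1 h9
  -- coefficients a vanish off I
  have ha0 : ∀ i ∉ I, a i = 0 := by
    have hzero : ∑ i, a i * ⟪ξ, S.α i⟫ = 0 := by
      rw [← e3, hE1]; ring
    have hterm : ∀ i, a i * ⟪ξ, S.α i⟫ = 0 := fun i =>
      (Finset.sum_eq_zero_iff_of_nonneg (fun i _ => e3nonneg i)).1 hzero i (Finset.mem_univ i)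
    intro i hi
    have hpos : 0 < ⟪ξ, S.α i⟫ := by
      have hco : 0 < ⟪ξ, S.coroot i⟫ := by rw [← hxiL]; exact S.Qpp_pos h1 hi
      rw [S.inner_coroot_eq] at hco
      by_contra hcon
      push_neg at hcon
      have : 2 * ⟪ξ, S.α i⟫ / ⟪S.α i, S.α i⟫ ≤ 0 :=
        div_nonpos_of_nonpos_of_nonneg (by linarith) (le_of_lt (S.inner_alpha_pos i))
      linarith
    rcases mul_eq_zero.1 (hterm i) with h | h
    · exact h
    · linarith
  -- u fixes lam2
  have hufix : u lam2 = lam2 := by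
    apply S.fix_of_parabolic_span hdomL2 I (fun i hi => (h2 i).2 hi) u huW
    refine ⟨a, ha0, ?_⟩
    rw [hetaL]
    exact hcone
  -- hence mu2 = w1⁻¹ lam2 and mu1 = w1⁻¹ lam1
  have hufix2 : u η = η := by rw [← hetaL]; exact hufix
  have hmu2 : w1 mu2 = lam2 := by rw [← huη, hufix2, ← hetaL]
  have hmu1 : w1 mu1 = lam1 := hxiL.symm
  -- adjust by an element of W_I to get a minimal coset representative
  obtain ⟨z, hzmem, hzpos⟩ := S.exists_coset_rep I (Subgroup.inv_mem _ hw1)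
  have hzW : z ∈ S.weylGroup := by
    refine (Subgroup.closure_le S.weylGroup).2 ?_ hzmem
    rintro g ⟨i, _, rfl⟩
    exact S.simpleReflection_mem i
  refine ⟨w1⁻¹ * z, Subgroup.mul_mem _ (Subgroup.inv_mem _ hw1) hzW, hzpos, ?_, ?_⟩
  · rw [LinearIsometryEquiv.coe_mul, Function.comp_apply,
      S.parabolic_fixes I (fun i hi => (h1 i).2 hi) z hzmem, ← hmu1,
      LinearIsometryEquiv.coe_inv, w1.symm_apply_apply]
  · rw [LinearIsometryEquiv.coe_mul, Function.comp_apply,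
      S.parabolic_fixes I (fun i hi => (h2 i).2 hi) z hzmem, ← hmu2,
      LinearIsometryEquiv.coe_inv, w1.symm_apply_apply]
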